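/- arXiv:2507.15723 — 4 statements merged into one kernel-verified Lean document; each statement's English description precedes it below -/
import Mathlib

section
/- Let G be a finite abelian group, S ⊆ G \ {0} a symmetric set, H₁ an arbitrary finite graph, and H the standard subdivision of H₁ (each edge of H₁ replaced by a path of length 2). Then t(H, Cay(G,S)) ≥ t(K₂, Cay(G,S))^{e(H)} = (|S|/|G|)^{2·e(H₁)}. -/
open Finset

/-- The Cayley graph of a finite abelian group `G` w.r.t. a symmetric set `S` avoiding `0`. -/
def cayley {G : Type*} [AddCommGroup G] (S : Finset G) (h0 : (0 : G) ∉ S)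
    (hsymm : ∀ s ∈ S, -s ∈ S) : SimpleGraph G where
  Adj x y := x - y ∈ S
  symm := by
    constructor
    intro x y h
    simpa [neg_sub] using hsymm _ h
  loopless := by
    constructor
    intro x h
    exact h0 (by simpa using h)

/-- The homomorphism density `t(H, Γ)`. -/
noncomputable def homDensity {α β : Type*} (H : SimpleGraph α) (Γ : SimpleGraph β) : ℝ :=
  (Nat.card {f : α → β // ∀ ⦃u v⦄, H.Adj u v → Γ.Adj (f u) (f v)} : ℝ) /
    (Nat.card β : ℝ) ^ (Nat.card α)

/-- The standard subdivision of a graph: replace each edge by a path of length 2. -/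
def standardSubdivision {V : Type*} (H : SimpleGraph V) : SimpleGraph (V ⊕ H.edgeSet) where
  Adj x y :=
    match x, y with
    | Sum.inl v, Sum.inr e => v ∈ (e : Sym2 V)
    | Sum.inr e, Sum.inl v => v ∈ (e : Sym2 V)
    | _, _ => False
  symm := by constructor; rintro (v | e) (w | f) h <;> simp_all
  loopless := by constructor; rintro (v | e) h <;> simp_all

lemma charlike_sum_nonneg_real {G : Type*} [AddCommGroup G] [Fintype G] (Φ : G → ℂ)
    (hmul : ∀ x y, Φ (x + y) = Φ x * Φ y) :
    ∃ t : ℝ, 0 ≤ t ∧ ∑ x, Φ x = (t : ℂ) := by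
  by_cases h : ∀ y : G, Φ y = 1
  · exact ⟨Fintype.card G, by positivity, by simp [h]⟩
  · push_neg at h
    obtain ⟨y, hy⟩ := h
    refine ⟨0, le_refl _, ?_⟩
    have h1 : ∑ x, Φ (y + x) = ∑ x, Φ x :=
      Fintype.sum_equiv (Equiv.addLeft y) _ _ (fun x => rfl)
    have h2 : Φ y * ∑ x, Φ x = ∑ x, Φ x := by
      rw [Finset.mul_sum]
      simpa only [← hmul] using h1
    have h3 : (Φ y - 1) * ∑ x, Φ x = 0 := by linear_combination sub_eq_zero.mpr h2
    rcases mul_eq_zero.1 h3 with h4 | h4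
    · exact absurd (by linear_combination h4) hy
    · simp [h4]

lemma key_ineq {G V E : Type*} [AddCommGroup G] [Fintype G] [DecidableEq G]
    [Fintype V] [DecidableEq V] [Fintype E] [DecidableEq E] (S : Finset G) (a b : E → V) :
    (Fintype.card G : ℝ) ^ Fintype.card V * (S.card : ℝ) ^ (2 * Fintype.card E) ≤
      (Fintype.card G : ℝ) ^ Fintype.card E *
        ∑ F : V → G, ∏ e : E,
          ∑ z : G, (if F (a e) - F (b e) + z ∈ S then (1:ℝ) else 0) *
            (if z ∈ S then (1:ℝ) else 0) := by
  classical
  set n := Fintype.card G with hn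
  set χ : G → ℂ := fun x => if x ∈ S then 1 else 0 with hχ
  set rC : G → ℂ := fun d => ∑ z, χ (d + z) * χ z with hrC
  set w : AddChar G ℂ → ℂ := fun ψ => ∑ x, χ x * ψ x with hw
  -- Fourier expansion of n * rC
  have fourier : ∀ d : G,
      ∑ ψ : AddChar G ℂ, (w ψ * (starRingEnd ℂ) (w ψ)) * ψ d = (n : ℂ) * rC d := by
    intro d
    have hconj : ∀ ψ : AddChar G ℂ, (starRingEnd ℂ) (w ψ) = ∑ y, χ y * ψ (-y) := by
      intro ψ
      rw [hw, map_sum]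
      refine Finset.sum_congr rfl fun y _ => ?_
      rw [map_mul, AddChar.map_neg_eq_conj]
      congr 1
      simp only [hχ]
      split <;> simp
    calc ∑ ψ : AddChar G ℂ, (w ψ * (starRingEnd ℂ) (w ψ)) * ψ d
        = ∑ ψ : AddChar G ℂ, ∑ x, ∑ y, (χ x * χ y) * ψ (x + -y + d) := by
          refine Finset.sum_congr rfl fun ψ _ => ?_
          rw [hconj, hw]
          rw [Finset.sum_mul_sum, Finset.sum_mul]
          refine Finset.sum_congr rfl fun x _ => ?_
          rw [Finset.sum_mul]
          refine Finset.sum_congr rfl fun y _ => ?_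
          rw [AddChar.map_add_eq_mul, AddChar.map_add_eq_mul]
          ring
      _ = ∑ x, ∑ y, (χ x * χ y) * ∑ ψ : AddChar G ℂ, ψ (x + -y + d) := by
          rw [Finset.sum_comm]
          refine Finset.sum_congr rfl fun x _ => ?_
          rw [Finset.sum_comm]
          refine Finset.sum_congr rfl fun y _ => ?_
          rw [Finset.mul_sum]
      _ = ∑ x, ∑ y, (χ x * χ y) * (if x + -y + d = 0 then (n : ℂ) else 0) := by
          simp_rw [AddChar.sum_apply_eq_ite, hn]
      _ = ∑ y, χ (y - d) * χ y * (n : ℂ) := by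
          rw [Finset.sum_comm]
          refine Finset.sum_congr rfl fun y _ => ?_
          rw [Finset.sum_eq_single (y - d)]
          · have h5 : y - d + -y + d = 0 := by abel
            rw [if_pos h5]
          · intro x _ hx
            rw [if_neg, mul_zero]
            intro hc
            exact hx (by linear_combination (norm := abel) hc)
          · simp
      _ = (n : ℂ) * rC d := by
          rw [hrC, Finset.mul_sum]
          refine Fintype.sum_equiv (Equiv.subRight d) _ _ fun y => ?_
          simp only [Equiv.subRight_apply]
          have : d + (y - d) = y := by abel
          rw [this]
          ring
  set c : AddChar G ℂ → ℂ := fun ψ => w ψ * (starRingEnd ℂ) (w ψ) with hc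
  set term : (E → AddChar G ℂ) → ℂ := fun κ =>
    (∏ e, c (κ e)) * ∑ F : V → G, ∏ e, (κ e) (F (a e) - F (b e)) with hterm
  have hterm_real : ∀ κ : E → AddChar G ℂ, ∃ t : ℝ, 0 ≤ t ∧ term κ = (t : ℂ) := by
    intro κ
    have hcprod : ∏ e, c (κ e) = ((∏ e, Complex.normSq (w (κ e)) : ℝ) : ℂ) := by
      push_cast
      refine Finset.prod_congr rfl fun e _ => ?_
      rw [hc]
      exact (Complex.mul_conj _).symm ▸ rfl
    set Ψ : V → G → ℂ := fun v x =>
      ∏ e, (if a e = v then (κ e) x else 1) * (if b e = v then (κ e) (-x) else 1) with hΨ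
    have hΨmul : ∀ v, ∀ x y, Ψ v (x + y) = Ψ v x * Ψ v y := by
      intro v x y
      rw [hΨ]
      simp only
      rw [← Finset.prod_mul_distrib]
      refine Finset.prod_congr rfl fun e _ => ?_
      have hx : (κ e) (x + y) = (κ e) x * (κ e) y := AddChar.map_add_eq_mul _ _ _
      have hy : (κ e) (-(x + y)) = (κ e) (-x) * (κ e) (-y) := by
        rw [show -(x + y) = -x + -y by abel, AddChar.map_add_eq_mul]
      split_ifs <;> simp only [hx, hy, one_mul, mul_one] <;> ring
    have hgroup : ∀ F : V → G, ∏ v, Ψ v (F v) = ∏ e, (κ e) (F (a e) - F (b e)) := by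
      intro F
      rw [hΨ]
      simp only
      rw [Finset.prod_comm]
      refine Finset.prod_congr rfl fun e _ => ?_
      rw [Finset.prod_mul_distrib, Finset.prod_ite_eq, Finset.prod_ite_eq]
      simp [sub_eq_add_neg, AddChar.map_add_eq_mul]
    have hT : (∏ v, ∑ x, Ψ v x) = ∑ F : V → G, ∏ e, (κ e) (F (a e) - F (b e)) := by
      rw [Finset.prod_univ_sum, Fintype.piFinset_univ]
      exact Finset.sum_congr rfl fun F _ => hgroup F
    choose tv htv0 htv using fun v => charlike_sum_nonneg_real (Ψ v) (hΨmul v)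
    refine ⟨(∏ e, Complex.normSq (w (κ e))) * ∏ v, tv v, ?_, ?_⟩
    · exact mul_nonneg (Finset.prod_nonneg fun e _ => Complex.normSq_nonneg _)
        (Finset.prod_nonneg fun v _ => htv0 v)
    · rw [hterm]
      simp only
      rw [hcprod, ← hT, Finset.prod_congr rfl (fun v (_ : v ∈ univ) => htv v)]
      push_cast
      ring
  have hw0 : w (0 : AddChar G ℂ) = (S.card : ℂ) := by
    rw [hw]
    simp only [AddChar.zero_apply, mul_one, hχ]
    rw [Finset.sum_boole]
    simp
  have htriv : term (fun _ => (0 : AddChar G ℂ)) =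
      (((S.card : ℝ) ^ (2 * Fintype.card E) * (n : ℝ) ^ Fintype.card V : ℝ) : ℂ) := by
    rw [hterm]
    simp only
    have hc0 : c (0 : AddChar G ℂ) = (S.card : ℂ) ^ 2 := by
      show w 0 * (starRingEnd ℂ) (w 0) = (S.card : ℂ) ^ 2
      rw [hw0, Complex.conj_natCast]
      ring
    simp only [hc0, AddChar.zero_apply, Finset.prod_const, Finset.card_univ,
      Finset.prod_const_one, Finset.sum_const, nsmul_eq_mul, mul_one]
    rw [Fintype.card_fun]
    push_cast
    ring
  set QR : ℝ := ∑ F : V → G, ∏ e : E,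
      ∑ z : G, (if F (a e) - F (b e) + z ∈ S then (1:ℝ) else 0) *
        (if z ∈ S then (1:ℝ) else 0) with hQR
  have hQC : ((QR : ℝ) : ℂ) = ∑ F : V → G, ∏ e, rC (F (a e) - F (b e)) := by
    rw [hQR]
    push_cast
    refine Finset.sum_congr rfl fun F _ => Finset.prod_congr rfl fun e _ => ?_
    rw [hrC, hχ]
    simp only
    push_cast
    refine Finset.sum_congr rfl fun z _ => ?_
    split_ifs <;> simp
  have expand : ((n:ℂ)) ^ Fintype.card E * ((QR : ℝ) : ℂ) = ∑ κ : E → AddChar G ℂ, term κ := by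
    rw [hQC, Finset.mul_sum]
    calc ∑ F : V → G, (n:ℂ) ^ Fintype.card E * ∏ e, rC (F (a e) - F (b e))
        = ∑ F : V → G, ∏ e, ((n:ℂ) * rC (F (a e) - F (b e))) := by
          refine Finset.sum_congr rfl fun F _ => ?_
          rw [Finset.prod_mul_distrib, Finset.prod_const, Finset.card_univ]
      _ = ∑ F : V → G, ∏ e, ∑ ψ : AddChar G ℂ, (c ψ) * ψ (F (a e) - F (b e)) := by
          refine Finset.sum_congr rfl fun F _ => Finset.prod_congr rfl fun e _ => ?_
          rw [← fourier]
      _ = ∑ F : V → G, ∑ κ : E → AddChar G ℂ, ∏ e, (c (κ e) * (κ e) (F (a e) - F (b e))) := by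
          refine Finset.sum_congr rfl fun F _ => ?_
          rw [Finset.prod_univ_sum, Fintype.piFinset_univ]
      _ = ∑ κ : E → AddChar G ℂ, term κ := by
          rw [Finset.sum_comm]
          refine Finset.sum_congr rfl fun κ _ => ?_
          rw [hterm]
          simp only
          rw [Finset.mul_sum]
          exact Finset.sum_congr rfl fun F _ => Finset.prod_mul_distrib
  choose tfun ht0 hteq using hterm_real
  have hsum : (n:ℝ) ^ Fintype.card E * QR = ∑ κ : E → AddChar G ℂ, tfun κ := by
    have h1 : (((n:ℝ) ^ Fintype.card E * QR : ℝ) : ℂ)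
        = ((∑ κ : E → AddChar G ℂ, tfun κ : ℝ) : ℂ) := by
      push_cast
      rw [expand]
      exact Finset.sum_congr rfl fun κ _ => hteq κ
    exact_mod_cast h1
  have htriv' : tfun (fun _ => (0 : AddChar G ℂ))
      = (S.card : ℝ) ^ (2 * Fintype.card E) * (n : ℝ) ^ Fintype.card V := by
    have := (hteq (fun _ => (0 : AddChar G ℂ))).symm.trans htriv
    exact_mod_cast this
  have hfin : (S.card : ℝ) ^ (2 * Fintype.card E) * (n : ℝ) ^ Fintype.card V
      ≤ ∑ κ : E → AddChar G ℂ, tfun κ := by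
    rw [← htriv']
    exact Finset.single_le_sum (fun κ _ => ht0 κ) (Finset.mem_univ _)
  rw [← hsum] at hfin
  linarith

/-- **Sidorenko's conjecture for standard subdivisions in abelian Cayley graphs.**
If `G` is a finite abelian group, `S ⊆ G \ {0}` is symmetric, `H₁` is an arbitrary finite
graph and `H` is its standard subdivision, then
`t(H, Cay(G,S)) ≥ t(K₂, Cay(G,S))^{e(H)} = (|S|/|G|)^{2·e(H₁)}`. -/
theorem sidorenko_standard_subdivision_abelian_cayley
    {G V₁ : Type*} [AddCommGroup G] [Fintype G] [Fintype V₁]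
    (S : Finset G) (h0 : (0 : G) ∉ S) (hsymm : ∀ s ∈ S, -s ∈ S)
    (H₁ : SimpleGraph V₁) :
    homDensity (standardSubdivision H₁) (cayley S h0 hsymm) ≥
      ((S.card : ℝ) / (Fintype.card G : ℝ)) ^ (2 * Nat.card H₁.edgeSet) := by
  classical
  haveI : Fintype H₁.edgeSet := Fintype.ofFinite _
  have hsel : ∀ e : H₁.edgeSet, ∃ p : V₁ × V₁, (e : Sym2 V₁) = s(p.1, p.2) := by
    rintro ⟨e, he⟩
    induction e using Sym2.ind with
    | _ x y => exact ⟨(x, y), rfl⟩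
  choose p hp using hsel
  set a : H₁.edgeSet → V₁ := fun e => (p e).1 with ha
  set b : H₁.edgeSet → V₁ := fun e => (p e).2 with hb
  have hmem : ∀ (e : H₁.edgeSet) (v : V₁), v ∈ (e : Sym2 V₁) ↔ v = a e ∨ v = b e := by
    intro e v
    rw [hp e]
    exact Sym2.mem_iff
  have hPiff : ∀ (F : V₁ → G) (g : H₁.edgeSet → G),
      (∀ ⦃u v⦄, (standardSubdivision H₁).Adj u v →
        (cayley S h0 hsymm).Adj (Sum.elim F g u) (Sum.elim F g v)) ↔
      ∀ e : H₁.edgeSet, F (a e) - g e ∈ S ∧ F (b e) - g e ∈ S := by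
    intro F g
    constructor
    · intro hPf e
      have h1 : (standardSubdivision H₁).Adj (Sum.inl (a e)) (Sum.inr e) := by
        show a e ∈ (e : Sym2 V₁)
        rw [hmem]
        left; rfl
      have h2 : (standardSubdivision H₁).Adj (Sum.inl (b e)) (Sum.inr e) := by
        show b e ∈ (e : Sym2 V₁)
        rw [hmem]
        right; rfl
      exact ⟨hPf h1, hPf h2⟩
    · intro hC u v huv
      match u, v, huv with
      | Sum.inl v, Sum.inr e, huv =>
        have hm : v = a e ∨ v = b e := (hmem e v).1 huv
        show F v - g e ∈ S
        rcases hm with h | h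
        · rw [h]; exact (hC e).1
        · rw [h]; exact (hC e).2
      | Sum.inr e, Sum.inl v, huv =>
        have hm : v = a e ∨ v = b e := (hmem e v).1 huv
        show g e - F v ∈ S
        have hv : F v - g e ∈ S := by
          rcases hm with h | h
          · rw [h]; exact (hC e).1
          · rw [h]; exact (hC e).2
        have := hsymm _ hv
        rwa [neg_sub] at this
  have hcard : (Nat.card {f : V₁ ⊕ H₁.edgeSet → G // ∀ ⦃u v⦄,
        (standardSubdivision H₁).Adj u v → (cayley S h0 hsymm).Adj (f u) (f v)} : ℝ)
      = ∑ F : V₁ → G, ∏ e : H₁.edgeSet,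
          ∑ z : G, (if F (a e) - F (b e) + z ∈ S then (1:ℝ) else 0) *
            (if z ∈ S then (1:ℝ) else 0) := by
    rw [Nat.card_eq_fintype_card, Fintype.card_subtype, Finset.card_filter]
    push_cast
    rw [← Equiv.sum_comp (Equiv.sumArrowEquivProdArrow V₁ H₁.edgeSet G).symm
      (fun f => if (∀ ⦃u v⦄, (standardSubdivision H₁).Adj u v →
        (cayley S h0 hsymm).Adj (f u) (f v)) then (1:ℝ) else 0)]
    rw [Fintype.sum_prod_type]
    refine Finset.sum_congr rfl fun F _ => ?_
    have he : ∀ g : H₁.edgeSet → G,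
        (if (∀ ⦃u v⦄, (standardSubdivision H₁).Adj u v →
            (cayley S h0 hsymm).Adj (Sum.elim F g u) (Sum.elim F g v)) then (1:ℝ) else 0)
        = ∏ e : H₁.edgeSet, (if F (a e) - g e ∈ S ∧ F (b e) - g e ∈ S then (1:ℝ) else 0) := by
      intro g
      by_cases hq : ∀ e : H₁.edgeSet, F (a e) - g e ∈ S ∧ F (b e) - g e ∈ S
      · rw [if_pos ((hPiff F g).mpr hq), Finset.prod_congr rfl (fun e _ => if_pos (hq e))]
        simp
      · rw [if_neg (fun hc => hq ((hPiff F g).mp hc))]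
        obtain ⟨e, he'⟩ := not_forall.mp hq
        exact (Finset.prod_eq_zero (Finset.mem_univ e)
          (show (if F (a e) - g e ∈ S ∧ F (b e) - g e ∈ S then (1:ℝ) else 0) = 0 from
            if_neg he')).symm
    have hsum2 : (∑ y : H₁.edgeSet → G, if (∀ ⦃u v⦄, (standardSubdivision H₁).Adj u v →
        (cayley S h0 hsymm).Adj ((Equiv.sumArrowEquivProdArrow V₁ H₁.edgeSet G).symm (F, y) u)
          ((Equiv.sumArrowEquivProdArrow V₁ H₁.edgeSet G).symm (F, y) v)) then (1:ℝ) else 0)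
        = ∑ y : H₁.edgeSet → G,
            ∏ e : H₁.edgeSet, (if F (a e) - y e ∈ S ∧ F (b e) - y e ∈ S then (1:ℝ) else 0) :=
      Finset.sum_congr rfl fun g _ => he g
    rw [hsum2]
    rw [show (univ : Finset (H₁.edgeSet → G)) = Fintype.piFinset (fun _ => univ) from
      (Fintype.piFinset_univ).symm]
    rw [← Finset.prod_univ_sum (fun _ => (univ : Finset G))
      (fun e z => if F (a e) - z ∈ S ∧ F (b e) - z ∈ S then (1:ℝ) else 0)]
    refine Finset.prod_congr rfl fun e _ => ?_
    refine Fintype.sum_equiv (Equiv.subLeft (F (b e))) _ _ fun z => ?_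
    simp only [Equiv.subLeft_apply]
    have h1 : F (a e) - F (b e) + (F (b e) - z) = F (a e) - z := by abel
    simp only [h1]
    by_cases h2 : F (a e) - z ∈ S <;> by_cases h3 : F (b e) - z ∈ S <;> simp [h2, h3]
  have hkey := key_ineq S a b
  have hn0 : (0:ℝ) < (Fintype.card G : ℝ) := by exact_mod_cast Fintype.card_pos
  rw [ge_iff_le, homDensity, hcard]
  rw [Nat.card_sum, Nat.card_eq_fintype_card, Nat.card_eq_fintype_card, Nat.card_eq_fintype_card]
  set n := (Fintype.card G : ℝ)
  set m := Fintype.card H₁.edgeSet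
  set cV := Fintype.card V₁
  set s := (S.card : ℝ)
  set Q := ∑ F : V₁ → G, ∏ e : H₁.edgeSet,
      ∑ z : G, (if F (a e) - F (b e) + z ∈ S then (1:ℝ) else 0) *
        (if z ∈ S then (1:ℝ) else 0) with hQ
  rw [div_pow, div_le_div_iff₀ (by positivity) (by positivity)]
  calc s ^ (2 * m) * n ^ (cV + m) = n ^ m * (n ^ cV * s ^ (2 * m)) := by
        rw [pow_add]; ring
    _ ≤ n ^ m * (n ^ m * Q) := by
        exact mul_le_mul_of_nonneg_left hkey (by positivity)
    _ = Q * n ^ (2 * m) := by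
        rw [two_mul, pow_add]; ring
end

section
/- Let G be a finite abelian group, let m ≤ k be positive integers, and let L be an m × k matrix with entries in {0, 1, −1} such that the induced group homomorphism G^k → G^m, x ↦ (Σ_{j=1}^k L_{ij} x_j)_{i=1}^m, is surjective. Then for every function f : G → ℂ, the average of f(x₁)⋯f(x_k) over all x = (x₁,…,x_k) in the kernel {x ∈ G^k : Σ_j L_{ij} x_j = 0 for all i} equals Σ_{(ξ₁,…,ξ_m) ∈ Ĝ^m} Π_{j=1}^k f̂(Σ_{i=1}^m L_{ij} ξ_i), where Ĝ is the character group of G and the integer-combination Σ_i L_{ij} ξ_i of characters is taken in Ĝ. -/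
open Finset

/-- Fourier coefficient of `f : G → ℂ` at the character `χ`. -/
noncomputable def fourCoeff {G : Type*} [AddCommGroup G] [Fintype G] (f : G → ℂ)
    (χ : AddChar G ℂ) : ℂ :=
  (∑ x : G, f x * (starRingEnd ℂ) (χ x)) / (Fintype.card G : ℂ)

private lemma addChar_map_sum {G : Type*} [AddCommGroup G] {ι : Type*} (ψ : AddChar G ℂ)
    (s : Finset ι) (g : ι → G) : ψ (∑ j ∈ s, g j) = ∏ j ∈ s, ψ (g j) := by
  induction s using Finset.cons_induction with
  | empty => simp
  | cons a s ha ih => rw [Finset.sum_cons, Finset.prod_cons, AddChar.map_add_eq_mul, ih]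

open scoped Classical in
/-- Averaging `f(x₁)⋯f(x_k)` over the kernel of a `{0,1,-1}`-matrix `L` (whose induced
homomorphism `G^k → G^m` is surjective) equals the Fourier-side sum
`Σ_{ξ ∈ Ĝ^m} Π_j f̂(Σ_i L_{ij} ξ_i)`, where `Ĝ = AddChar G ℂ` is written additively. -/
theorem average_over_kernel_eq_fourier_sum
    {G : Type*} [AddCommGroup G] [Fintype G] {m k : ℕ} (hm : 0 < m) (hmk : m ≤ k)
    (L : Fin m → Fin k → ℤ) (hL : ∀ i j, L i j = 0 ∨ L i j = 1 ∨ L i j = -1)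
    (hsurj : Function.Surjective fun x : Fin k → G => fun i : Fin m => ∑ j, L i j • x j)
    (f : G → ℂ) :
    (∑ x ∈ Finset.univ.filter (fun x : Fin k → G => ∀ i, ∑ j, L i j • x j = 0),
        ∏ j, f (x j)) /
        ((Finset.univ.filter (fun x : Fin k → G => ∀ i, ∑ j, L i j • x j = 0)).card : ℂ) =
      ∑ ξ : Fin m → AddChar G ℂ, ∏ j, fourCoeff f (∑ i, L i j • ξ i) := by
  classical
  set c : ℂ := (Fintype.card G : ℂ) with hc
  have hc0 : c ≠ 0 := Nat.cast_ne_zero.2 Fintype.card_ne_zero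
  set Kf : Finset (Fin k → G) :=
    Finset.univ.filter (fun x : Fin k → G => ∀ i, ∑ j, L i j • x j = 0) with hKf
  -- the inner character sum
  have inner : ∀ y : Fin k → G,
      (∑ ξ : Fin m → AddChar G ℂ, ∏ j, (starRingEnd ℂ) ((∑ i, L i j • ξ i) (y j)))
        = if (∀ i, ∑ j, L i j • y j = 0) then c ^ m else 0 := by
    intro y
    have h1 : ∀ (ξ : Fin m → AddChar G ℂ) (j : Fin k),
        (starRingEnd ℂ) ((∑ i, L i j • ξ i) (y j)) = ∏ i, (ξ i) (L i j • (-(y j))) := by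
      intro ξ j
      rw [← AddChar.map_neg_eq_conj, AddChar.sum_apply]
      refine Finset.prod_congr rfl fun i _ => ?_
      rw [AddChar.zsmul_apply, AddChar.map_zsmul_eq_zpow]
    calc (∑ ξ : Fin m → AddChar G ℂ, ∏ j, (starRingEnd ℂ) ((∑ i, L i j • ξ i) (y j)))
        = ∑ ξ : Fin m → AddChar G ℂ, ∏ i, (ξ i) (∑ j, L i j • (-(y j))) := by
          refine Finset.sum_congr rfl fun ξ _ => ?_
          simp_rw [h1]
          rw [Finset.prod_comm]
          exact Finset.prod_congr rfl fun i _ => (addChar_map_sum (ξ i) _ _).symm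
      _ = ∏ i, ∑ χ : AddChar G ℂ, χ (∑ j, L i j • (-(y j))) := by
          rw [Finset.prod_univ_sum]
          exact (Fintype.sum_congr _ _ fun ξ => rfl).symm.trans
            (by rw [Fintype.piFinset_univ])
      _ = ∏ i, (if (∑ j, L i j • y j) = 0 then c else 0) := by
          refine Finset.prod_congr rfl fun i _ => ?_
          rw [AddChar.sum_apply_eq_ite]
          have : (∑ j, L i j • (-(y j))) = -(∑ j, L i j • y j) := by
            rw [← Finset.sum_neg_distrib]
            exact Finset.sum_congr rfl fun j _ => smul_neg _ _
          rw [this, neg_eq_zero]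
      _ = if (∀ i, ∑ j, L i j • y j = 0) then c ^ m else 0 := by
          split_ifs with h
          · simp [h, Finset.prod_const, Finset.card_univ]
          · push_neg at h
            obtain ⟨i, hi⟩ := h
            exact Finset.prod_eq_zero (Finset.mem_univ i) (by simp [hi])
  -- the main computation for the RHS
  have key : (∑ ξ : Fin m → AddChar G ℂ, ∏ j, fourCoeff f (∑ i, L i j • ξ i))
      = (c ^ m * ∑ x ∈ Kf, ∏ j, f (x j)) / c ^ k := by
    calc (∑ ξ : Fin m → AddChar G ℂ, ∏ j, fourCoeff f (∑ i, L i j • ξ i))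
        = ∑ ξ : Fin m → AddChar G ℂ,
            (∑ y : Fin k → G, ∏ j, f (y j) * (starRingEnd ℂ) ((∑ i, L i j • ξ i) (y j))) / c ^ k := by
          refine Finset.sum_congr rfl fun ξ _ => ?_
          unfold fourCoeff
          rw [Finset.prod_div_distrib, Finset.prod_const, Finset.card_univ,
            Fintype.card_fin]
          congr 1
          rw [Finset.prod_univ_sum, Fintype.piFinset_univ]
      _ = (∑ y : Fin k → G, (∏ j, f (y j)) *
            ∑ ξ : Fin m → AddChar G ℂ, ∏ j, (starRingEnd ℂ) ((∑ i, L i j • ξ i) (y j))) / c ^ k := by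
          rw [← Finset.sum_div]
          congr 1
          rw [Finset.sum_comm]
          refine Finset.sum_congr rfl fun y _ => ?_
          rw [Finset.mul_sum]
          exact Finset.sum_congr rfl fun ξ _ => Finset.prod_mul_distrib
      _ = (∑ y : Fin k → G, (∏ j, f (y j)) *
            if (∀ i, ∑ j, L i j • y j = 0) then c ^ m else 0) / c ^ k := by
          congr 1
          exact Finset.sum_congr rfl fun y _ => by rw [inner y]
      _ = (c ^ m * ∑ x ∈ Kf, ∏ j, f (x j)) / c ^ k := by
          congr 1
          rw [Finset.mul_sum, hKf, Finset.sum_filter]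
          refine Finset.sum_congr rfl fun y _ => ?_
          split_ifs with h <;> simp [mul_comm]
  -- cardinality of the kernel
  have hcard : (Kf.card : ℂ) * c ^ m = c ^ k := by
    set φ : (Fin k → G) →+ (Fin m → G) :=
      AddMonoidHom.mk' (fun x => fun i => ∑ j, L i j • x j) (by
        intro a b
        funext i
        simp [smul_add, Finset.sum_add_distrib]) with hφ
    have hsurj' : Function.Surjective φ := hsurj
    have h1 : Nat.card (Fin k → G) =
        Nat.card ((Fin k → G) ⧸ φ.ker) * Nat.card φ.ker :=
      AddSubgroup.card_eq_card_quotient_mul_card_addSubgroup _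
    have h2 : Nat.card ((Fin k → G) ⧸ φ.ker) = Nat.card (Fin m → G) :=
      Nat.card_congr (QuotientAddGroup.quotientKerEquivOfSurjective φ hsurj').toEquiv
    have h3 : Nat.card φ.ker = Kf.card := by
      rw [Nat.card_eq_fintype_card, hKf]
      rw [← Fintype.card_subtype]
      apply Fintype.card_congr
      apply Equiv.subtypeEquivRight
      intro x
      constructor
      · intro hx i
        have := congrFun (AddMonoidHom.mem_ker.1 hx) i
        exact this
      · intro hx
        rw [AddMonoidHom.mem_ker]
        funext i
        exact hx i
    have h4 : (Nat.card (Fin k → G) : ℂ) = c ^ k := by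
      simp [Nat.card_eq_fintype_card, Fintype.card_fun, hc]
    have h5 : (Nat.card (Fin m → G) : ℂ) = c ^ m := by
      simp [Nat.card_eq_fintype_card, Fintype.card_fun, hc]
    have := congrArg (fun n : ℕ => (n : ℂ)) h1
    simp only [Nat.cast_mul, h2] at this
    rw [h4, h5, h3] at this
    rw [this, mul_comm]
  -- conclude
  rw [key]
  have hK0 : (Kf.card : ℂ) ≠ 0 := by
    have : (0 : Fin k → G) ∈ Kf := by
      rw [hKf]
      simp
    have hpos : 0 < Kf.card := Finset.card_pos.2 ⟨0, this⟩
    exact_mod_cast hpos.ne'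
  rw [← hcard]
  field_simp
end

section
/- Let G be a finite abelian group, S ⊆ G \ {0} a symmetric set, and H a connected bipartite graph with bipartition V(H) = W ∪ U. Let M : G^{V(H)} → G^{E(H)} be the map (Mv)_e = v_i − v_j for each edge e = {i,j} with i ∈ W, j ∈ U. Then t(H, Cay(G,S)) equals the average, over all x in the image of M, of Π_{e ∈ E(H)} 1_S(x_e), where 1_S is the indicator function of S. -/
open Finset

open scoped Classical in
/-- For a bipartition with parts `W` and `Wᶜ`, the signed difference `v i - v j` across an
edge `{i, j}` with `i ∈ W`, `j ∉ W`. -/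
noncomputable def edgeMap {G V : Type*} [AddCommGroup G] (W : Set V) (v : V → G) :
    Sym2 V → G :=
  Sym2.lift ⟨fun a b =>
      if a ∈ W ∧ b ∉ W then v a - v b else if b ∈ W ∧ a ∉ W then v b - v a else 0,
    by
      intro a b
      by_cases ha : a ∈ W <;> by_cases hb : b ∈ W <;> simp [ha, hb]⟩

open scoped Classical in
lemma edgeMap_adj {G V : Type*} [AddCommGroup G] (W : Set V) {H : SimpleGraph V}
    (hbip : ∀ ⦃a b : V⦄, H.Adj a b → (a ∈ W ↔ b ∉ W)) (v : V → G) {a b : V} (h : H.Adj a b) :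
    edgeMap W v s(a, b) = if a ∈ W then v a - v b else v b - v a := by
  have hab := hbip h
  by_cases ha : a ∈ W
  · have hb : b ∉ W := hab.mp ha
    simp [edgeMap, ha, hb]
  · have hb : b ∈ W := by by_contra hb; exact ha (hab.mpr hb)
    simp [edgeMap, ha, hb]

lemma edgeMap_add_const {G V : Type*} [AddCommGroup G] (W : Set V) (v : V → G) (c : G)
    (e : Sym2 V) : edgeMap W (fun i => v i + c) e = edgeMap W v e := by
  classical
  induction e using Sym2.inductionOn with
  | hf a b => simp [edgeMap]

open scoped Classical in
/-- For a connected bipartite graph `H` with bipartition `W ∪ Wᶜ` and the map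
`M : G^{V(H)} → G^{E(H)}`, `(Mv)_{{i,j}} = v_i - v_j` (`i ∈ W`, `j ∉ W`), the homomorphism
density `t(H, Cay(G,S))` equals the average over the image of `M` of `Π_e 1_S(x_e)`. -/
theorem homDensity_eq_average_over_image
    {G V : Type*} [AddCommGroup G] [Fintype G] [Fintype V]
    (S : Finset G) (h0 : (0 : G) ∉ S) (hsymm : ∀ s ∈ S, -s ∈ S)
    (H : SimpleGraph V) (hconn : H.Connected)
    (W : Set V) (hbip : ∀ ⦃a b : V⦄, H.Adj a b → (a ∈ W ↔ b ∉ W)) :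
    homDensity H (cayley S h0 hsymm) =
      (∑ x ∈ Finset.univ.image (fun (v : V → G) (e : H.edgeSet) => edgeMap W v (e : Sym2 V)),
          ∏ e : H.edgeSet, (if x e ∈ S then (1 : ℝ) else 0)) /
        ((Finset.univ.image
            (fun (v : V → G) (e : H.edgeSet) => edgeMap W v (e : Sym2 V))).card : ℝ) := by
  set Mfun : (V → G) → (H.edgeSet → G) :=
    fun v e => edgeMap W v (e : Sym2 V) with hMfun
  set T : Finset (H.edgeSet → G) := Finset.univ.image Mfun with hT
  obtain ⟨i0⟩ := hconn.nonempty
  set N := Fintype.card G with hN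
  set n := Fintype.card V with hn
  -- the difference across an edge is constant on fibers
  have step : ∀ v w : V → G, Mfun w = Mfun v → ∀ {a b : V}, H.Adj a b →
      w a - v a = w b - v b := by
    intro v w h a b hadj
    have key : edgeMap W w s(a, b) = edgeMap W v s(a, b) :=
      congrFun h ⟨s(a, b), H.mem_edgeSet.mpr hadj⟩
    rw [edgeMap_adj W hbip w hadj, edgeMap_adj W hbip v hadj] at key
    by_cases ha : a ∈ W
    · rw [if_pos ha, if_pos ha] at key
      exact sub_eq_sub_iff_sub_eq_sub.mp key
    · rw [if_neg ha, if_neg ha] at key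
      exact (sub_eq_sub_iff_sub_eq_sub.mp key).symm
  have const : ∀ v w : V → G, Mfun w = Mfun v → ∀ i j : V, w i - v i = w j - v j := by
    intro v w h i j
    obtain ⟨p⟩ := hconn i j
    induction p with
    | nil => rfl
    | cons hadj p ih => exact (step v w h hadj).trans ih
  have fiber_eq : ∀ v w : V → G, Mfun w = Mfun v ↔ ∃ c, w = fun i => v i + c := by
    intro v w
    constructor
    · intro h
      refine ⟨w i0 - v i0, funext fun i => ?_⟩
      rw [← const v w h i i0]
      abel
    · rintro ⟨c, rfl⟩
      funext e
      exact edgeMap_add_const W v c (e : Sym2 V)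
  have fiber_card : ∀ v : V → G,
      (Finset.univ.filter fun w => Mfun w = Mfun v).card = N := by
    intro v
    have hb : (Finset.univ : Finset G).card =
        (Finset.univ.filter fun w => Mfun w = Mfun v).card := by
      refine Finset.card_bij (fun (c : G) _ => fun i => v i + c) ?_ ?_ ?_
      · intro c _
        simp only [Finset.mem_filter, Finset.mem_univ, true_and]
        exact (fiber_eq v _).mpr ⟨c, rfl⟩
      · intro c _ c' _ h
        have := congrFun h i0
        exact add_left_cancel this
      · intro w hw
        simp only [Finset.mem_filter, Finset.mem_univ, true_and] at hw
        obtain ⟨c, hc⟩ := (fiber_eq v w).mp hw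
        exact ⟨c, Finset.mem_univ c, hc.symm⟩
    simpa [hN] using hb.symm
  -- total count : N ^ n = T.card * N
  have hcount : N ^ n = T.card * N := by
    have h1 := Finset.card_eq_sum_card_image Mfun (Finset.univ : Finset (V → G))
    have h2 : ∀ x ∈ T, (Finset.univ.filter fun a => Mfun a = x).card = N := by
      intro x hx
      obtain ⟨v, _, rfl⟩ := Finset.mem_image.mp hx
      exact fiber_card v
    rw [Finset.card_univ, Fintype.card_fun] at h1
    rw [← hN, ← hn] at h1
    rw [h1, ← hT, Finset.sum_congr rfl h2, Finset.sum_const, smul_eq_mul]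
  set Q : (H.edgeSet → G) → Prop := fun x => ∀ e : H.edgeSet, x e ∈ S with hQ
  -- hom characterization
  have hP : ∀ v : V → G,
      (∀ ⦃a b : V⦄, H.Adj a b → (cayley S h0 hsymm).Adj (v a) (v b)) ↔ Q (Mfun v) := by
    intro v
    constructor
    · rintro hv ⟨e, he⟩
      induction e using Sym2.inductionOn with
      | hf a b =>
        have hadj : H.Adj a b := H.mem_edgeSet.mp he
        show edgeMap W v s(a, b) ∈ S
        rw [edgeMap_adj W hbip v hadj]
        by_cases ha : a ∈ W
        · rw [if_pos ha]; exact hv hadj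
        · rw [if_neg ha]; exact hv hadj.symm
    · intro hv a b hadj
      have key := hv ⟨s(a, b), H.mem_edgeSet.mpr hadj⟩
      have : edgeMap W v s(a, b) ∈ S := key
      rw [edgeMap_adj W hbip v hadj] at this
      show v a - v b ∈ S
      by_cases ha : a ∈ W
      · rwa [if_pos ha] at this
      · rw [if_neg ha] at this
        simpa [neg_sub] using hsymm _ this
  -- hom count
  have hhom : Nat.card {f : V → G //
      ∀ ⦃u w⦄, H.Adj u w → (cayley S h0 hsymm).Adj (f u) (f w)} =
      (T.filter Q).card * N := by
    rw [Nat.card_eq_fintype_card, Fintype.card_subtype]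
    have hfe : Finset.univ.filter
        (fun f : V → G => ∀ ⦃u w⦄, H.Adj u w → (cayley S h0 hsymm).Adj (f u) (f w)) =
        Finset.univ.filter (fun v => Q (Mfun v)) :=
      Finset.filter_congr fun v _ => by simpa using hP v
    rw [hfe]
    have h1 := Finset.card_eq_sum_card_image Mfun (Finset.univ.filter fun v => Q (Mfun v))
    have himg : (Finset.univ.filter fun v => Q (Mfun v)).image Mfun = T.filter Q := by
      ext x
      simp only [Finset.mem_image, Finset.mem_filter, Finset.mem_univ, true_and, hT]
      constructor
      · rintro ⟨v, hv, rfl⟩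
        exact ⟨⟨v, rfl⟩, hv⟩
      · rintro ⟨⟨v, rfl⟩, hx⟩
        exact ⟨v, hx, rfl⟩
    have h2 : ∀ x ∈ T.filter Q,
        ((Finset.univ.filter fun v => Q (Mfun v)).filter fun a => Mfun a = x).card = N := by
      intro x hx
      rw [Finset.mem_filter] at hx
      obtain ⟨v, _, rfl⟩ := Finset.mem_image.mp hx.1
      have : ((Finset.univ.filter fun v => Q (Mfun v)).filter fun a => Mfun a = Mfun v) =
          Finset.univ.filter fun a => Mfun a = Mfun v := by
        ext a
        simp only [Finset.mem_filter, Finset.mem_univ, true_and]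
        constructor
        · rintro ⟨-, h⟩; exact h
        · intro h; refine ⟨?_, h⟩; rw [h]; exact hx.2
      rw [this]
      exact fiber_card v
    rw [h1, himg, Finset.sum_congr rfl h2, Finset.sum_const, smul_eq_mul]
  -- rewrite the right-hand side sum
  have hsum : (∑ x ∈ T, ∏ e : H.edgeSet, (if x e ∈ S then (1 : ℝ) else 0)) =
      ((T.filter Q).card : ℝ) := by
    rw [← Finset.sum_boole]
    refine Finset.sum_congr rfl fun x _ => ?_
    rw [Finset.prod_boole]
    congr 1
    simp [hQ]
  have hN0 : (0 : ℝ) < (N : ℝ) := by exact_mod_cast Fintype.card_pos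
  have hT0 : (0 : ℝ) < (T.card : ℝ) := by
    exact_mod_cast Finset.card_pos.mpr (Finset.univ_nonempty.image Mfun)
  rw [homDensity, hhom, Nat.card_eq_fintype_card (α := G), Nat.card_eq_fintype_card (α := V)]
  rw [hsum]
  have hpow : ((N : ℝ)) ^ n = (T.card : ℝ) * N := by exact_mod_cast hcount
  rw [← hN, ← hn, hpow]
  push_cast
  rw [mul_div_mul_right _ _ (ne_of_gt hN0)]
end

section
/- Let G be a finite abelian group, let H be a connected bipartite graph on n vertices and k edges with bipartition V(H) = W ∪ U, let T be a spanning tree of H with chords e₁,…,e_m (m = k − n + 1) and fundamental cycles C_{e₁},…,C_{e_m}, and for each i fix a proper 2-edge-colouring σ_i : C_{e_i} → {+1,−1} (adjacent edges of the cycle get opposite signs; such a colouring exists since every cycle of a bipartite graph is even). Let L be the m × k matrix with L_{ij} = σ_i(j) if edge j lies on C_{e_i} and L_{ij} = 0 otherwise, and let M : G^{V(H)} → G^{E(H)} be the map (Mv)_{{i,j}} = v_i − v_j (i ∈ W, j ∈ U). Then the image of M equals {x ∈ G^{E(H)} : Σ_{j∈E(H)} L_{ij} x_j = 0 for every i ∈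 [m]}, i.e. Im(M) = ker(L). -/
open Finset

open scoped Classical

lemma aux_telescope {G V : Type*} [AddCommGroup G] {H : SimpleGraph V} {a b : V}
    (v : V → G) (p : H.Walk a b) :
    (p.darts.map (fun d => v d.toProd.1 - v d.toProd.2)).sum = v a - v b := by
  induction p with
  | nil => simp
  | cons h p ih => rw [SimpleGraph.Walk.darts_cons, List.map_cons, List.sum_cons, ih]; abel

lemma aux_edgeMap_dart {G V : Type*} [AddCommGroup G] {W : Set V} (v : V → G)
    {H : SimpleGraph V} (hbip : ∀ ⦃a b : V⦄, H.Adj a b → (a ∈ W ↔ b ∉ W)) (d : H.Dart) :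
    edgeMap W v d.edge
      = (if d.toProd.1 ∈ W then (1:ℤ) else -1) • (v d.toProd.1 - v d.toProd.2) := by
  obtain ⟨⟨x, y⟩, hadj⟩ := d
  have hxy := hbip hadj
  by_cases hx : x ∈ W
  · have hy : y ∉ W := hxy.mp hx
    simp [SimpleGraph.Dart.edge, edgeMap, hx, hy]
  · have hy : y ∈ W := by by_contra hy; exact hx (hxy.mpr hy)
    simp [SimpleGraph.Dart.edge, edgeMap, hx, hy]

lemma aux_cycle_sum {G V : Type*} [AddCommGroup G] {W : Set V} {H : SimpleGraph V}
    (hbip : ∀ ⦃a b : V⦄, H.Adj a b → (a ∈ W ↔ b ∉ W))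
    {a : V} (p : H.Walk a a) (L : Sym2 V → ℤ)
    (hproper : ∀ (t : Fin p.edges.length),
      L (p.edges.get t) =
        - L (p.edges.get ⟨(t.val + 1) % p.edges.length, Nat.mod_lt _ t.pos⟩))
    (v : V → G) :
    (p.edges.map (fun e => L e • edgeMap W v e)).sum = 0 := by
  set l := p.darts with hl
  have he : p.edges = l.map SimpleGraph.Dart.edge := rfl
  have hlen : p.edges.length = l.length := by rw [he, List.length_map]
  by_cases hn : l.length = 0
  · have : l = [] := List.length_eq_zero_iff.mp hn
    rw [he, this]; simp
  have pos : 0 < l.length := Nat.pos_of_ne_zero hn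
  set g : H.Dart → ℤ := fun d => if d.toProd.1 ∈ W then (1:ℤ) else -1 with hg
  have chain : ∀ (i : ℕ) (h : i + 1 < l.length),
      (l[i]'(Nat.lt_of_succ_lt h)).toProd.2 = (l[i+1]'h).toProd.1 := by
    intro i h
    have hc := List.isChain_iff_getElem.mp p.isChain_dartAdj_darts i
      (by rw [show p.darts = l from hl.symm]; omega)
    exact hc
  have key : ∀ (tv : ℕ) (ht : tv < l.length),
      L (l[tv]'ht).edge * g (l[tv]'ht) = L (l[0]'pos).edge * g (l[0]'pos) := by
    intro tv
    induction tv with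
    | zero => intro ht; rfl
    | succ k ih =>
      intro ht
      have hk : k < l.length := Nat.lt_of_succ_lt ht
      have hk1e : k + 1 < p.edges.length := by omega
      have h1 : L (l[k+1]'ht).edge = - L (l[k]'hk).edge := by
        have hp := hproper ⟨k, by omega⟩
        simp only [List.get_eq_getElem, Nat.mod_eq_of_lt hk1e] at hp
        have e1 : p.edges[k]'(by omega) = (l[k]'hk).edge := by
          simp [he, List.getElem_map]
        have e2 : p.edges[k+1]'hk1e = (l[k+1]'ht).edge := by
          simp [he, List.getElem_map]
        rw [e1, e2] at hp
        omega
      have hadjd := (l[k]'hk).adj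
      have hW := hbip hadjd
      have h2 : g (l[k+1]'ht) = - g (l[k]'hk) := by
        rw [hg]
        simp only [← chain k ht]
        by_cases hx : (l[k]'hk).toProd.1 ∈ W
        · simp [hx, hW.mp hx]
        · have : (l[k]'hk).toProd.2 ∈ W := by
            by_contra hcon; exact hx (hW.mpr hcon)
          simp [hx, this]
      rw [h1, h2, neg_mul_neg]
      exact ih hk
  set ε := L (l[0]'pos).edge * g (l[0]'pos) with hε
  calc (p.edges.map (fun e => L e • edgeMap W v e)).sum
      = (l.map (fun d => L d.edge • edgeMap W v d.edge)).sum := by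
        rw [he, List.map_map]; rfl
    _ = ∑ t : Fin l.length, L (l[t.1]).edge • edgeMap W v (l[t.1]).edge :=
        (Fin.sum_univ_fun_getElem l (fun d => L d.edge • edgeMap W v d.edge)).symm
    _ = ∑ t : Fin l.length, ε • (v (l[t.1]).toProd.1 - v (l[t.1]).toProd.2) := by
        refine Finset.sum_congr rfl fun t _ => ?_
        rw [aux_edgeMap_dart v hbip, smul_smul]
        rw [show (if (l[t.1]).toProd.1 ∈ W then (1:ℤ) else -1) = g (l[t.1]) from rfl]
        rw [key t.1 t.2]
    _ = ε • ∑ t : Fin l.length, (v (l[t.1]).toProd.1 - v (l[t.1]).toProd.2) :=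
        (Finset.smul_sum).symm
    _ = ε • (l.map (fun d => v d.toProd.1 - v d.toProd.2)).sum := by
        congr 1
        exact Fin.sum_univ_fun_getElem l (fun d => v d.toProd.1 - v d.toProd.2)
    _ = 0 := by rw [aux_telescope]; simp

lemma aux_sum_edgeSet {G V : Type*} [AddCommGroup G] [Fintype V] {W : Set V}
    {H : SimpleGraph V}
    (hbip : ∀ ⦃a b : V⦄, H.Adj a b → (a ∈ W ↔ b ∉ W))
    {a : V} (p : H.Walk a a) (L : Sym2 V → ℤ)
    (hnodup : p.edges.Nodup)
    (hsupp : ∀ e, L e ≠ 0 → e ∈ p.edges)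
    (hproper : ∀ (t : Fin p.edges.length),
      L (p.edges.get t) =
        - L (p.edges.get ⟨(t.val + 1) % p.edges.length, Nat.mod_lt _ t.pos⟩))
    (v : V → G) :
    ∑ e : H.edgeSet, L (e : Sym2 V) • edgeMap W v (e : Sym2 V) = 0 := by
  classical
  rw [Finset.sum_set_coe (f := fun e => L e • edgeMap W v e)]
  have hsub : p.edges.toFinset ⊆ H.edgeSet.toFinset := by
    intro e he
    rw [List.mem_toFinset] at he
    rw [Set.mem_toFinset]
    exact p.edges_subset_edgeSet he
  have hvan : ∀ e ∈ H.edgeSet.toFinset, e ∉ p.edges.toFinset →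
      L e • edgeMap W v e = 0 := by
    intro e _ he
    rw [List.mem_toFinset] at he
    have : L e = 0 := by
      by_contra hc
      exact he (hsupp e hc)
    simp [this]
  rw [← Finset.sum_subset hsub hvan, List.sum_toFinset _ hnodup]
  exact aux_cycle_sum hbip p L hproper v

lemma aux_tree_potential {G V : Type*} [AddCommGroup G] {W : Set V}
    {H : SimpleGraph V}
    (hbip : ∀ ⦃a b : V⦄, H.Adj a b → (a ∈ W ↔ b ∉ W))
    (T : Set (Sym2 V)) (hTsub : T ⊆ H.edgeSet)
    (hTtree : (SimpleGraph.fromEdgeSet T).IsTree)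
    (X : Sym2 V → G) :
    ∃ v : V → G, ∀ e ∈ T, edgeMap W v e = X e := by
  classical
  set G' := SimpleGraph.fromEdgeSet T with hG'
  have hne : Nonempty V := hTtree.isConnected.nonempty
  obtain ⟨r⟩ := hne
  set δ : G'.Dart → G := fun d => if d.toProd.1 ∈ W then -X d.edge else X d.edge with hδ
  have hEU : ∀ u w : V, ∃! p : G'.Walk u w, p.IsPath := hTtree.existsUnique_path
  set P : ∀ u : V, G'.Walk r u := fun u => (hEU r u).choose with hPdef
  have hP : ∀ u, (P u).IsPath := fun u => (hEU r u).choose_spec.1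
  have hPu : ∀ (u : V) (q : G'.Walk r u), q.IsPath → q = P u :=
    fun u q hq => (hEU r u).choose_spec.2 q hq
  set v : V → G := fun u => ((P u).darts.map δ).sum with hv
  -- adjacency in G' comes from H
  have hadjH : ∀ {x y : V}, G'.Adj x y → H.Adj x y := by
    intro x y hxy
    rw [hG', SimpleGraph.fromEdgeSet_adj] at hxy
    exact (H.mem_edgeSet).mp (hTsub hxy.1)
  have hstep : ∀ (x y : V) (h : G'.Adj x y), v y - v x = δ ⟨(x, y), h⟩ := by
    intro x y h
    by_cases hin : y ∈ (P x).support
    · -- y on the path to x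
      have hdrop : (P x).dropUntil y hin = SimpleGraph.Walk.cons h.symm SimpleGraph.Walk.nil := by
        have hconsPath : (SimpleGraph.Walk.cons h.symm SimpleGraph.Walk.nil :
            G'.Walk y x).IsPath := by
          rw [SimpleGraph.Walk.cons_isPath_iff]
          exact ⟨SimpleGraph.Walk.IsPath.nil, by simp [h.ne']⟩
        exact (hEU y x).unique ((hP x).dropUntil hin) hconsPath
      have htake : (P x).takeUntil y hin = P y :=
        hPu y _ ((hP x).takeUntil hin)
      have hsplit := (P x).take_spec hin
      have : v x = v y + δ ⟨(y, x), h.symm⟩ := by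
        rw [hv]
        simp only
        rw [← hsplit, SimpleGraph.Walk.darts_append, List.map_append, List.sum_append,
          htake, hdrop]
        simp
      rw [this]
      have hHxy := hadjH h
      have hW := hbip hHxy
      rw [hδ]
      simp only
      have hedge : (SimpleGraph.Dart.mk (y, x) h.symm).edge = s(x, y) := by
        simp [SimpleGraph.Dart.edge, Sym2.eq_swap]
      have hedge2 : (SimpleGraph.Dart.mk (x, y) h).edge = s(x, y) := by
        simp [SimpleGraph.Dart.edge]
      rw [hedge, hedge2]
      by_cases hx : x ∈ W
      · have hy : y ∉ W := hW.mp hx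
        simp [hx, hy]
      · have hy : y ∈ W := by by_contra hc; exact hx (hW.mpr hc)
        simp [hx, hy]
    · -- extend the path to x by the edge
      have hconc : ((P x).concat h).IsPath := by
        rw [← SimpleGraph.Walk.isPath_reverse_iff, SimpleGraph.Walk.reverse_concat,
          SimpleGraph.Walk.cons_isPath_iff]
        constructor
        · rw [SimpleGraph.Walk.isPath_reverse_iff]; exact hP x
        · rw [SimpleGraph.Walk.support_reverse, List.mem_reverse]; exact hin
      have hPy : (P x).concat h = P y := hPu y _ hconc
      rw [hv]
      simp only
      rw [← hPy, SimpleGraph.Walk.darts_concat]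
      simp
  refine ⟨v, ?_⟩
  intro e he
  induction e using Sym2.ind with
  | _ x y =>
    have hHxy : H.Adj x y := (H.mem_edgeSet).mp (hTsub he)
    have hadj : G'.Adj x y := by
      rw [hG', SimpleGraph.fromEdgeSet_adj]
      exact ⟨he, hHxy.ne⟩
    have hs := hstep x y hadj
    have hW := hbip hHxy
    rw [hδ] at hs
    simp only at hs
    have hedge2 : (SimpleGraph.Dart.mk (x, y) hadj).edge = s(x, y) := by
      simp [SimpleGraph.Dart.edge]
    rw [hedge2] at hs
    by_cases hx : x ∈ W
    · have hy : y ∉ W := hW.mp hx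
      rw [if_pos hx] at hs
      simp [edgeMap, hx, hy]
      rw [show v x - v y = -(v y - v x) by abel, hs, neg_neg]
    · have hy : y ∈ W := by by_contra hc; exact hx (hW.mpr hc)
      rw [if_neg hx] at hs
      simp [edgeMap, hx, hy]
      exact hs

open scoped Classical in
/-- **Im(M) = ker(L) for the circuit matrix.**  Let `H` be a connected bipartite graph with
bipartition `W ∪ Wᶜ`, `T` a spanning tree, `c` an enumeration of the chords, `C i` the
fundamental cycle of the `i`-th chord (given as a closed walk), and let `L` be a circuit
matrix: `L i` is supported exactly on the edges of `C i`, takes values in `{0,1,-1}`, and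
assigns opposite signs to consecutive edges of the cycle (a proper `2`-edge-colouring).
Then the image of `M : G^{V(H)} → G^{E(H)}`, `(Mv)_{{i,j}} = v_i - v_j`, equals the kernel
of `L` acting on `G^{E(H)}`. -/
theorem range_edgeMap_eq_kernel_circuitMatrix
    {G V : Type*} [AddCommGroup G] [Fintype G] [Fintype V]
    (H : SimpleGraph V) (hconn : H.Connected)
    (W : Set V) (hbip : ∀ ⦃a b : V⦄, H.Adj a b → (a ∈ W ↔ b ∉ W))
    -- the spanning tree
    (T : Set (Sym2 V)) (hTsub : T ⊆ H.edgeSet)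
    (hTtree : (SimpleGraph.fromEdgeSet T).IsTree)
    -- the chords `e₁, …, e_m`
    {m : ℕ} (c : Fin m ≃ ↥(H.edgeSet \ T))
    -- the fundamental cycles `C_{e₁}, …, C_{e_m}`
    (b : Fin m → V) (C : ∀ i : Fin m, H.Walk (b i) (b i))
    (hCcyc : ∀ i, (C i).IsCycle)
    (hCsub : ∀ i, ∀ e ∈ (C i).edges, e = ((c i) : Sym2 V) ∨ e ∈ T)
    (hCchord : ∀ i, ((c i) : Sym2 V) ∈ (C i).edges)
    -- the circuit matrix `L`
    (L : Fin m → Sym2 V → ℤ)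
    (hLval : ∀ i e, L i e = 0 ∨ L i e = 1 ∨ L i e = -1)
    (hLsupp : ∀ i e, L i e ≠ 0 ↔ e ∈ (C i).edges)
    (hLproper : ∀ i (t : Fin (C i).edges.length),
      L i ((C i).edges.get t) =
        - L i ((C i).edges.get ⟨(t.val + 1) % (C i).edges.length, Nat.mod_lt _ t.pos⟩)) :
    Set.range (fun (v : V → G) (e : H.edgeSet) => edgeMap W v (e : Sym2 V)) =
      {x : H.edgeSet → G | ∀ i : Fin m, ∑ e : H.edgeSet, L i (e : Sym2 V) • x e = 0} := by
  classical
  ext x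
  simp only [Set.mem_range, Set.mem_setOf_eq]
  constructor
  · rintro ⟨v, rfl⟩ i
    exact aux_sum_edgeSet hbip (C i) (L i) (hCcyc i).edges_nodup
      (fun e he => (hLsupp i e).mp he) (hLproper i) v
  · intro hx
    set X : Sym2 V → G := fun e => if h : e ∈ H.edgeSet then x ⟨e, h⟩ else 0 with hX
    obtain ⟨v, hvT⟩ := aux_tree_potential hbip T hTsub hTtree X
    have hvT' : ∀ (e : Sym2 V) (he : e ∈ H.edgeSet), e ∈ T → edgeMap W v e = x ⟨e, he⟩ := by
      intro e he heT
      rw [hvT e heT, hX]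
      simp [he]
    refine ⟨v, ?_⟩
    funext e
    obtain ⟨e, he⟩ := e
    by_cases heT : e ∈ T
    · exact hvT' e he heT
    · obtain ⟨i, hi⟩ : ∃ i, ((c i : Sym2 V)) = e := ⟨c.symm ⟨e, ⟨he, heT⟩⟩, by simp⟩
      have h1 := hx i
      have h2 := aux_sum_edgeSet hbip (C i) (L i) (hCcyc i).edges_nodup
        (fun e' he' => (hLsupp i e').mp he') (hLproper i) v
      have h3 : ∑ e' : H.edgeSet, L i (e' : Sym2 V) • (edgeMap W v (e' : Sym2 V) - x e') = 0 := by
        simp only [smul_sub, Finset.sum_sub_distrib, h1, h2, sub_zero]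
      set e0 : H.edgeSet := ⟨e, he⟩ with he0
      have hsingle : ∑ e' : H.edgeSet, L i (e' : Sym2 V) • (edgeMap W v (e' : Sym2 V) - x e')
          = L i e • (edgeMap W v e - x e0) := by
        refine Finset.sum_eq_single e0 ?_ ?_
        · intro e' _ hne
          by_cases hz : L i (e' : Sym2 V) = 0
          · simp [hz]
          · rcases hCsub i _ ((hLsupp i _).mp hz) with hch | hT'
            · exfalso
              exact hne (Subtype.ext (by rw [hch, hi]))
            · rw [hvT' _ e'.2 hT']
              simp
          
        · intro hmem
          exact absurd (Finset.mem_univ e0) hmem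
      rw [hsingle] at h3
      have hLne : L i e ≠ 0 := (hLsupp i e).mpr (hi ▸ hCchord i)
      rcases hLval i e with h | h | h
      · exact absurd h hLne
      · rw [h, one_smul, sub_eq_zero] at h3
        exact h3
      · rw [h, neg_smul, one_smul, neg_eq_zero, sub_eq_zero] at h3
        exact h3
end
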